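/- An ordered collection (I_1,…,I_r) of k-element subsets of [n] is sorted (every pair (I_i, I_j) with i < j is sorted) if and only if, writing I_l = {I_{l1} < ⋯ < I_{lk}}, the chain of inequalities I_{11} ≤ I_{21} ≤ ⋯ ≤ I_{r1} ≤ I_{12} ≤ I_{22} ≤ ⋯ ≤ I_{r2} ≤ ⋯ ≤ I_{rk} holds. -/

import Mathlib

/-- The nondecreasing rearrangement of the multiset union `I ∪ J`. -/
def sortList (I J : Finset ℕ) : List ℕ := Multiset.sort (I.val + J.val) (· ≤ ·)

/-- `U(I,J)`: the odd-position (1st, 3rd, …) entries of `sort(I ∪ J)`. -/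
def sortU (I J : Finset ℕ) : Finset ℕ :=
  (((List.range (sortList I J).length).filter (fun t => t % 2 = 0)).map
    (fun t => (sortList I J).getD t 0)).toFinset

/-- `V(I,J)`: the even-position (2nd, 4th, …) entries of `sort(I ∪ J)`. -/
def sortV (I J : Finset ℕ) : Finset ℕ :=
  (((List.range (sortList I J).length).filter (fun t => t % 2 = 1)).map
    (fun t => (sortList I J).getD t 0)).toFinset

/-- Interleaving condition `i_1 ≤ j_1 ≤ i_2 ≤ j_2 ≤ ⋯ ≤ i_k ≤ j_k` for two finite
sets of the same cardinality, via their increasing enumerations. -/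
def Interleaved (A B : Finset ℕ) : Prop :=
  A.card = B.card ∧
  (∀ t, t < A.card → (A.sort (· ≤ ·)).getD t 0 ≤ (B.sort (· ≤ ·)).getD t 0) ∧
  (∀ t, t + 1 < A.card → (B.sort (· ≤ ·)).getD t 0 ≤ (A.sort (· ≤ ·)).getD (t + 1) 0)

/-- An ordered collection `(I_1,…,I_r)` of `k`-subsets of `[n]` is sorted (every pair
`(I_i, I_j)`, `i < j`, is sorted, i.e. interleaved) iff, writing
`I_l = {I_{l1} < ⋯ < I_{lk}}`, the chain
`I_{11} ≤ I_{21} ≤ ⋯ ≤ I_{r1} ≤ I_{12} ≤ ⋯ ≤ I_{rk}` holds. -/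
theorem sorted_collection_iff_chain (n k r : ℕ) (hr : 0 < r) (I : Fin r → Finset ℕ)
    (hIn : ∀ l, I l ⊆ Finset.range n) (hI : ∀ l, (I l).card = k) :
    (∀ l l' : Fin r, l < l' → Interleaved (I l) (I l')) ↔
      ((∀ t, t < k → ∀ l l' : Fin r, l ≤ l' →
          ((I l).sort (· ≤ ·)).getD t 0 ≤ ((I l').sort (· ≤ ·)).getD t 0) ∧
       (∀ t, t + 1 < k →
          ((I ⟨r - 1, by omega⟩).sort (· ≤ ·)).getD t 0 ≤
            ((I ⟨0, hr⟩).sort (· ≤ ·)).getD (t + 1) 0)) := by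
  have sort_mono : ∀ (A : Finset ℕ) {s t : ℕ}, s ≤ t → t < A.card →
      (A.sort (· ≤ ·)).getD s 0 ≤ (A.sort (· ≤ ·)).getD t 0 := by
    intro A s t hst ht
    have hlen : (A.sort (· ≤ ·)).length = A.card := A.length_sort _
    rw [List.getD_eq_getElem _ _ (by omega), List.getD_eq_getElem _ _ (by omega)]
    exact (A.pairwise_sort (· ≤ ·)).rel_get_of_le (by simpa using hst)
  constructor
  · intro h
    constructor
    · intro t ht l l' hll'
      rcases lt_or_eq_of_le hll' with hlt | rfl
      · exact (h l l' hlt).2.1 t (by rw [hI]; exact ht)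
      · exact le_refl _
    · intro t ht
      by_cases hr1 : r = 1
      · have : (⟨r - 1, by omega⟩ : Fin r) = ⟨0, hr⟩ := by simp [hr1]
        rw [this]
        exact sort_mono _ (Nat.le_succ t) (by rw [hI]; exact ht)
      · have hlt : (⟨0, hr⟩ : Fin r) < ⟨r - 1, by omega⟩ := by
          simp [Fin.lt_def]; omega
        exact (h _ _ hlt).2.2 t (by rw [hI]; exact ht)
  · rintro ⟨h1, h2⟩ l l' hll'
    refine ⟨by rw [hI, hI], ?_, ?_⟩
    · intro t ht
      exact h1 t (by rwa [hI l] at ht) l l' (le_of_lt hll')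
    · intro t ht
      rw [hI l] at ht
      calc ((I l').sort (· ≤ ·)).getD t 0
          ≤ ((I ⟨r - 1, by omega⟩).sort (· ≤ ·)).getD t 0 :=
            h1 t (by omega) l' ⟨r - 1, by omega⟩ (by simp [Fin.le_def]; omega)
        _ ≤ ((I ⟨0, hr⟩).sort (· ≤ ·)).getD (t + 1) 0 := h2 t ht
        _ ≤ ((I l).sort (· ≤ ·)).getD (t + 1) 0 :=
            h1 (t + 1) ht ⟨0, hr⟩ l (by simp [Fin.le_def])
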